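/- Let S be a random variable taking values in the lattice {na + kl : k ∈ ℤ} (a ≥ 0, l > 0) with probability mass function p, mean 0 and variance s² > 0, and let S' = S/s. Let φ be the standard Gaussian density and define the quantized Gaussian mass function q((na+kl)/s) = ∫_{(na+kl)/s}^{(na+(k+1)l)/s} φ(x) dx. Then |D_KL(p_{S'} ‖ q) + H(S) − (1/2)log(2πe) − log(s/l)| ≤ l/s + l²/(2s²), where H(S) = −Σ_k p(na+kl) log p(na+kl) is the discrete Shannon entropy. -/

import Mathlib

/-- the standard Gaussian density -/
noncomputable def stdGaussianPDF (x : ℝ) : ℝ :=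
  (Real.sqrt (2 * Real.pi))⁻¹ * Real.exp (-(x ^ 2) / 2)

lemma stdGaussianPDF_pos (x : ℝ) : 0 < stdGaussianPDF x := by
  unfold stdGaussianPDF
  have : 0 < Real.sqrt (2 * Real.pi) := Real.sqrt_pos.2 (by positivity)
  positivity

lemma stdGaussianPDF_continuous : Continuous stdGaussianPDF := by
  unfold stdGaussianPDF
  continuity

/-- pointwise comparison of the Gaussian density on a short interval -/
lemma gauss_interval_bound (a d : ℝ) (hd : 0 < d) (t : ℝ) (ht : t ∈ Set.Icc a (a + d)) :
    stdGaussianPDF a * Real.exp (-(d * |a| + d ^ 2 / 2)) ≤ stdGaussianPDF t ∧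
    stdGaussianPDF t ≤ stdGaussianPDF a * Real.exp (d * |a| + d ^ 2 / 2) := by
  obtain ⟨h1, h2⟩ := ht
  have hinv : (0:ℝ) ≤ (Real.sqrt (2 * Real.pi))⁻¹ := by positivity
  have habs1 : a ≤ |a| := le_abs_self a
  have habs2 : -|a| ≤ a := neg_abs_le a
  have hsq1 : t ^ 2 ≤ a ^ 2 + 2 * (d * |a| + d ^ 2 / 2) := by
    nlinarith [mul_nonneg (sub_nonneg.2 h1) (sub_nonneg.2 h2), sq_nonneg (t - a)]
  have hsq2 : a ^ 2 - 2 * (d * |a| + d ^ 2 / 2) ≤ t ^ 2 := by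
    nlinarith [mul_nonneg (sub_nonneg.2 h1) (sub_nonneg.2 h2), sq_nonneg (t - a),
      mul_nonneg (sub_nonneg.2 h1) (sub_nonneg.2 habs2)]
  constructor
  · unfold stdGaussianPDF
    rw [mul_assoc, ← Real.exp_add]
    apply mul_le_mul_of_nonneg_left _ hinv
    apply Real.exp_le_exp.2
    linarith
  · unfold stdGaussianPDF
    rw [mul_assoc, ← Real.exp_add]
    apply mul_le_mul_of_nonneg_left _ hinv
    apply Real.exp_le_exp.2
    linarith

/-- For a mean-zero random variable `S` on the lattice `{c + kl : k ∈ ℤ}`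
with pmf `p`, variance `s² > 0`, and the quantized Gaussian `q`,
`|D_KL(p_{S'} ‖ q) + H(S) − (1/2)log(2πe) − log(s/l)| ≤ l/s + l²/(2s²)`. -/
theorem lattice_entropy_KL_comparison (c l s : ℝ) (hc : 0 ≤ c) (hl : 0 < l) (hs : 0 < s)
    (p : ℤ → ℝ) (hp : ∀ k, 0 ≤ p k) (hsum : HasSum p 1)
    (hmean : HasSum (fun k : ℤ => p k * (c + k * l)) 0)
    (hvar : HasSum (fun k : ℤ => p k * (c + k * l) ^ 2) (s ^ 2))
    (q : ℤ → ℝ)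
    (hq : ∀ k : ℤ, q k = ∫ x in ((c + k * l) / s)..((c + (k + 1) * l) / s), stdGaussianPDF x)
    (hent : Summable (fun k : ℤ => p k * Real.log (p k)))
    (hkl : Summable (fun k : ℤ => p k * Real.log (p k / q k))) :
    |(∑' k : ℤ, p k * Real.log (p k / q k)) + (-∑' k : ℤ, p k * Real.log (p k))
        - (1 / 2) * Real.log (2 * Real.pi * Real.exp 1) - Real.log (s / l)|
      ≤ l / s + l ^ 2 / (2 * s ^ 2) := by
  set d : ℝ := l / s with hd
  have hd0 : 0 < d := div_pos hl hs
  set x : ℤ → ℝ := fun k => (c + k * l) / s with hxdef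
  set B : ℤ → ℝ := fun k => d * |x k| + d ^ 2 / 2 with hBdef
  set G : ℝ → ℝ := stdGaussianPDF with hGdef
  -- rewrite q as integral over [x k, x k + d]
  have hq' : ∀ k : ℤ, q k = ∫ t in (x k)..(x k + d), G t := by
    intro k
    rw [hq k]
    congr 1
    show (c + ((k:ℝ) + 1) * l) / s = (c + k * l) / s + l / s
    field_simp
    ring
  -- integral bounds
  have hqbound : ∀ k : ℤ, d * G (x k) * Real.exp (-(B k)) ≤ q k ∧
      q k ≤ d * G (x k) * Real.exp (B k) := by
    intro k
    have hab : x k ≤ x k + d := by linarith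
    have hint : IntervalIntegrable G MeasureTheory.volume (x k) (x k + d) :=
      stdGaussianPDF_continuous.intervalIntegrable _ _
    constructor
    · have h1 : (∫ _t in (x k)..(x k + d), G (x k) * Real.exp (-(B k)))
          ≤ ∫ t in (x k)..(x k + d), G t := by
        apply intervalIntegral.integral_mono_on hab (intervalIntegrable_const) hint
        intro t ht
        exact (gauss_interval_bound (x k) d hd0 t ht).1
      rw [intervalIntegral.integral_const, smul_eq_mul] at h1
      rw [hq' k]
      calc d * G (x k) * Real.exp (-(B k)) = (x k + d - x k) * (G (x k) * Real.exp (-(B k))) := by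
            ring
        _ ≤ _ := h1
    · have h1 : (∫ t in (x k)..(x k + d), G t)
          ≤ ∫ _t in (x k)..(x k + d), G (x k) * Real.exp (B k) := by
        apply intervalIntegral.integral_mono_on hab hint (intervalIntegrable_const)
        intro t ht
        exact (gauss_interval_bound (x k) d hd0 t ht).2
      rw [intervalIntegral.integral_const, smul_eq_mul] at h1
      rw [hq' k]
      calc (∫ t in (x k)..(x k + d), G t) ≤ (x k + d - x k) * (G (x k) * Real.exp (B k)) := h1
        _ = d * G (x k) * Real.exp (B k) := by ring
  have hGpos : ∀ k : ℤ, 0 < d * G (x k) := fun k => mul_pos hd0 (stdGaussianPDF_pos _)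
  have hqpos : ∀ k : ℤ, 0 < q k := by
    intro k
    have := (hqbound k).1
    have h0 : 0 < d * G (x k) * Real.exp (-(B k)) := mul_pos (hGpos k) (Real.exp_pos _)
    linarith
  -- log bound
  have hlog : ∀ k : ℤ, |Real.log (d * G (x k)) - Real.log (q k)| ≤ B k := by
    intro k
    rw [abs_le]
    obtain ⟨hb1, hb2⟩ := hqbound k
    have hL1 : Real.log (d * G (x k) * Real.exp (-(B k))) ≤ Real.log (q k) :=
      Real.log_le_log (mul_pos (hGpos k) (Real.exp_pos _)) hb1
    have hL2 : Real.log (q k) ≤ Real.log (d * G (x k) * Real.exp (B k)) :=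
      Real.log_le_log (hqpos k) hb2
    rw [Real.log_mul (ne_of_gt (hGpos k)) (Real.exp_ne_zero _), Real.log_exp] at hL1 hL2
    constructor <;> linarith
  -- summability / sums
  have hX2 : HasSum (fun k : ℤ => p k * (x k) ^ 2) 1 := by
    have h := hvar.mul_right ((s ^ 2)⁻¹)
    rw [mul_inv_cancel₀ (by positivity)] at h
    convert h using 2 with k
    case e'_3 => rfl
    show p k * ((c + k * l) / s) ^ 2 = p k * (c + k * l) ^ 2 * (s ^ 2)⁻¹
    rw [div_pow]
    ring
  set K : ℝ := Real.log d - (1 / 2) * Real.log (2 * Real.pi) with hKdef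
  have hlogG : ∀ k : ℤ, Real.log (d * G (x k)) = K - (x k) ^ 2 / 2 := by
    intro k
    have h2pi : (0:ℝ) < 2 * Real.pi := by positivity
    rw [show d * G (x k) = d * (Real.sqrt (2 * Real.pi))⁻¹ * Real.exp (-(x k ^ 2) / 2) from by
      rw [hGdef]; unfold stdGaussianPDF; ring]
    rw [Real.log_mul (by positivity) (Real.exp_ne_zero _), Real.log_exp,
      Real.log_mul (ne_of_gt hd0) (by positivity), Real.log_inv,
      Real.log_sqrt (le_of_lt h2pi)]
    rw [hKdef]
    ring
  have hGsum : HasSum (fun k : ℤ => p k * Real.log (d * G (x k))) (K - 1 / 2) := by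
    have h := (hsum.mul_right K).sub (hX2.mul_right (1 / 2))
    rw [one_mul, one_mul] at h
    convert h using 2 with k
    case e'_3 => rfl
    rw [hlogG k]
    ring
  -- pointwise rewriting of KL terms
  have hptwise : ∀ k : ℤ, p k * Real.log (p k / q k) - p k * Real.log (p k)
      = -(p k * Real.log (q k)) := by
    intro k
    rcases eq_or_lt_of_le (hp k) with h | h
    · simp [← h]
    · rw [Real.log_div (ne_of_gt h) (ne_of_gt (hqpos k))]
      ring
  have hLsummable : Summable (fun k : ℤ => p k * Real.log (q k)) := by
    have h := hent.sub hkl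
    apply h.congr
    intro k
    have := hptwise k
    linarith [hptwise k]
  -- the difference of the two tsums
  have hT : (∑' k : ℤ, p k * Real.log (p k / q k)) + (-∑' k : ℤ, p k * Real.log (p k))
      = -∑' k : ℤ, p k * Real.log (q k) := by
    rw [← sub_eq_add_neg, ← Summable.tsum_sub hkl hent, ← tsum_neg]
    exact tsum_congr hptwise
  -- the constant
  have hC : (1 / 2) * Real.log (2 * Real.pi * Real.exp 1) + Real.log (s / l)
      = -(K - 1 / 2) := by
    have h2pi : (0:ℝ) < 2 * Real.pi := by positivity
    rw [Real.log_mul (ne_of_gt h2pi) (Real.exp_ne_zero _), Real.log_exp,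
      show Real.log (s / l) = -Real.log d from by
        rw [hd, ← Real.log_inv]; congr 1; field_simp]
    rw [hKdef]
    ring
  -- rewrite the whole LHS
  set F : ℤ → ℝ := fun k => p k * (Real.log (d * G (x k)) - Real.log (q k)) with hFdef
  have hFsummable : Summable F := by
    have h := (hGsum.summable).sub hLsummable
    apply h.congr
    intro k
    rw [hFdef]
    ring
  have hmain : (∑' k : ℤ, p k * Real.log (p k / q k)) + (-∑' k : ℤ, p k * Real.log (p k))
      - (1 / 2) * Real.log (2 * Real.pi * Real.exp 1) - Real.log (s / l)
      = ∑' k : ℤ, F k := by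
    rw [sub_sub, hT, hC]
    rw [show -∑' k : ℤ, p k * Real.log (q k) - -(K - 1/2)
        = (∑' k : ℤ, p k * Real.log (d * G (x k))) - ∑' k : ℤ, p k * Real.log (q k) from by
      rw [hGsum.tsum_eq]; ring]
    rw [← Summable.tsum_sub hGsum.summable hLsummable]
    apply tsum_congr
    intro k
    rw [hFdef]
    ring
  -- bound on |F k|
  have hFbound : ∀ k : ℤ, |F k| ≤ p k * B k := by
    intro k
    rw [hFdef, abs_mul, abs_of_nonneg (hp k)]
    exact mul_le_mul_of_nonneg_left (hlog k) (hp k)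
  -- summability of the bound
  have hAM : ∀ k : ℤ, p k * |x k| ≤ (p k + p k * (x k) ^ 2) / 2 := by
    intro k
    nlinarith [hp k, sq_nonneg (|x k| - 1), sq_abs (x k), mul_nonneg (hp k) (sq_nonneg (|x k| - 1))]
  have hPXnonneg : ∀ k : ℤ, 0 ≤ p k * |x k| := fun k => mul_nonneg (hp k) (abs_nonneg _)
  have hPXsummable : Summable (fun k : ℤ => p k * |x k|) := by
    apply Summable.of_nonneg_of_le hPXnonneg hAM
    exact ((hsum.summable.add hX2.summable).div_const 2)
  have hPXle : (∑' k : ℤ, p k * |x k|) ≤ 1 := by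
    have h1 : (∑' k : ℤ, p k * |x k|) ≤ ∑' k : ℤ, (p k + p k * (x k) ^ 2) / 2 :=
      Summable.tsum_le_tsum hAM hPXsummable ((hsum.summable.add hX2.summable).div_const 2)
    have h2 : HasSum (fun k : ℤ => (p k + p k * (x k) ^ 2) / 2) 1 := by
      convert (hsum.add hX2).div_const 2 using 1
      case e'_3 => rfl
      norm_num
    rw [h2.tsum_eq] at h1
    exact h1
  have hPB : HasSum (fun k : ℤ => p k * B k) ((∑' k : ℤ, p k * |x k|) * d + d ^ 2 / 2) := by
    have h := (hPXsummable.hasSum.mul_right d).add (hsum.mul_right (d ^ 2 / 2))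
    rw [one_mul] at h
    convert h using 2 with k
    case e'_3 => rfl
    rw [hBdef]
    ring
  -- final chain
  rw [hmain]
  have hstep1 : |∑' k : ℤ, F k| ≤ ∑' k : ℤ, |F k| := by
    have habs : Summable (fun k : ℤ => ‖F k‖) := by
      simpa only [Real.norm_eq_abs] using hFsummable.abs
    simpa only [Real.norm_eq_abs] using norm_tsum_le_tsum_norm habs
  have hstep2 : (∑' k : ℤ, |F k|) ≤ ∑' k : ℤ, p k * B k :=
    Summable.tsum_le_tsum hFbound hFsummable.abs hPB.summable
  have hstep3 : (∑' k : ℤ, p k * B k) ≤ d + d ^ 2 / 2 := by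
    rw [hPB.tsum_eq]
    have := hPXle
    nlinarith [hd0.le]
  have hfinal : d + d ^ 2 / 2 = l / s + l ^ 2 / (2 * s ^ 2) := by
    rw [hd]
    field_simp
  linarith [hstep1, hstep2, hstep3]
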